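/- Let (V, ω) be a finite-dimensional symplectic vector space and let C, C' ⊆ V be two coisotropic linear subspaces such that C ∩ C' is a symplectic subspace and dim C + dim C' = dim V + dim(C ∩ C'). Then there exists a symplectic basis (e_1,...,e_n, f_1,...,f_n) of V and a subset A ⊆ {1,...,n} such that C = span of all basis vectors except {f_α : α ∈ A} and C' = span of all basis vectors except {e_α : α ∈ A}; in particular the annihilating linear constraints defining C and C' can be chosen as q_α = 0 (α ∈ A) and p^α = 0 (α ∈ A) respectively, which are canonically conjugate: {q_α, p^β} = δ_α^β. -/

import Mathlib

open Module Submodule LinearMap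

universe u

lemma nondeg_of_sepLeft_of_isAlt {W : Type*} [AddCommGroup W] [Module ℝ W]
    (B : LinearMap.BilinForm ℝ W) (hA : B.IsAlt) (h : B.SeparatingLeft) : B.Nondegenerate :=
  (LinearMap.IsRefl.nondegenerate_iff_separatingLeft (B := B) hA.isRefl).mpr h

/-- Linear Darboux theorem: a nondegenerate alternating form admits a symplectic basis. -/
lemma exists_symplectic_basis :
    ∀ (N : ℕ) (V : Type u) [AddCommGroup V] [Module ℝ V] [FiniteDimensional ℝ V]
    (ω : LinearMap.BilinForm ℝ V), Module.finrank ℝ V = N → ω.IsAlt → ω.Nondegenerate →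
    ∃ (m : ℕ) (b : Basis (Fin m ⊕ Fin m) ℝ V),
      (∀ i j, ω (b (Sum.inl i)) (b (Sum.inl j)) = 0) ∧
      (∀ i j, ω (b (Sum.inr i)) (b (Sum.inr j)) = 0) ∧
      (∀ i j, ω (b (Sum.inl i)) (b (Sum.inr j)) = if i = j then 1 else 0) := by
  intro N
  induction N using Nat.strong_induction_on with
  | _ N ih =>
    intro V _ _ _ ω hrk halt hnd
    rcases Nat.eq_zero_or_pos N with hN | hN
    · subst hN
      have : Subsingleton V := (Module.finrank_zero_iff (R := ℝ)).mp hrk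
      refine ⟨0, Basis.empty V, ?_, ?_, ?_⟩ <;> intro i
      all_goals exact absurd i.2 (by omega)
    · -- pick v ≠ 0
      have : Nontrivial V := Module.finrank_pos_iff.mp (hrk ▸ hN)
      obtain ⟨v, hv⟩ := exists_ne (0 : V)
      obtain ⟨w0, hw0⟩ : ∃ w, ω v w ≠ 0 := by
        by_contra h
        push_neg at h
        exact hv (hnd.1 v h)
      set u : V := (ω v w0)⁻¹ • w0 with hu
      have hωvu : ω v u = 1 := by
        simp [hu, smul_eq_mul]
        field_simp
      have hωuv : ω u v = -1 := by
        have h := LinearMap.IsAlt.neg halt v u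
        rw [hωvu] at h; linarith
      set P : Submodule ℝ V := span ℝ {v, u} with hP
      have hvP : v ∈ P := subset_span (by simp)
      have huP : u ∈ P := subset_span (by simp)
      have hmemP : ∀ x ∈ P, ∃ a b : ℝ, x = a • v + b • u := by
        intro x hx
        have := mem_span_pair.mp (by rwa [hP, show ({v, u} : Set V) = {v, u} from rfl] at hx)
        obtain ⟨a, b, hab⟩ := mem_span_pair.mp (by rwa [hP] at hx)
        exact ⟨a, b, hab.symm⟩
      have hPnd : (ω.restrict P).Nondegenerate := by
        refine nondeg_of_sepLeft_of_isAlt _ (fun x => halt x) ?_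
        rintro ⟨x, hx⟩ hxall
        obtain ⟨a, b, rfl⟩ := hmemP x hx
        have h1 : ω (a • v + b • u) u = a := by
          simp [halt u, hωvu]
        have h2 : ω (a • v + b • u) v = -b := by
          simp [halt v, hωuv]
        have e1 := hxall ⟨u, huP⟩
        have e2 := hxall ⟨v, hvP⟩
        simp only [LinearMap.BilinForm.restrict_apply, LinearMap.domRestrict_apply, h1, h2] at e1 e2
        have ha : a = 0 := by linarith
        have hb : b = 0 := by linarith
        apply Subtype.ext
        simp [ha, hb]
      have hrefl : ω.IsRefl := halt.isRefl
      have hcompl : IsCompl P (ω.orthogonal P) :=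
        ω.isCompl_orthogonal_of_restrict_nondegenerate hrefl hPnd
      set W : Submodule ℝ V := ω.orthogonal P with hW
      -- finrank P = 2
      have hli : LinearIndependent ℝ ![v, u] := by
        rw [LinearIndependent.pair_iff]
        intro a b hab
        have h1 : ω v (a • v + b • u) = b := by simp [halt v, hωvu]
        have h2 : ω (a • v + b • u) u = a := by simp [halt u, hωvu]
        rw [hab] at h1 h2
        simp at h1 h2
        exact ⟨h2.symm, h1.symm⟩
      have hrange : Set.range ![v, u] = {v, u} := by
        ext x
        simp [Fin.exists_fin_two, eq_comm]
        tauto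
      have hfrP : finrank ℝ P = 2 := by
        rw [hP, ← hrange, finrank_span_eq_card hli]
        simp
      have h2N : 2 ≤ N := by
        have := Submodule.finrank_le P
        omega
      have hWrk : finrank ℝ W = N - 2 := by
        have := LinearMap.BilinForm.finrank_orthogonal hnd P
        rw [hfrP, hrk] at this
        exact this
      have hWalt : (ω.restrict W).IsAlt := fun x => halt x
      have hWnd : (ω.restrict W).Nondegenerate := by
        refine nondeg_of_sepLeft_of_isAlt _ hWalt ?_
        rintro ⟨x, hxW⟩ hxall
        apply Subtype.ext
        show x = 0
        apply hnd.1
        intro y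
        have hy : y ∈ P ⊔ W := by rw [hcompl.sup_eq_top]; trivial
        obtain ⟨p, hp, w', hw', rfl⟩ := Submodule.mem_sup.mp hy
        have h1 : ω x p = 0 := hrefl p x (hxW p hp)
        have h2 : ω x w' = 0 := by
          have := hxall ⟨w', hw'⟩
          simpa using this
        simp [h1, h2]
      obtain ⟨m, b', hb1, hb2, hb3⟩ := ih (N - 2) (by omega) W (ω.restrict W) hWrk hWalt hWnd
      have hb1' : ∀ i j, ω ↑(b' (Sum.inl i)) ↑(b' (Sum.inl j)) = 0 := by
        intro i j; simpa using hb1 i j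
      have hb2' : ∀ i j, ω ↑(b' (Sum.inr i)) ↑(b' (Sum.inr j)) = 0 := by
        intro i j; simpa using hb2 i j
      have hb3' : ∀ i j, ω ↑(b' (Sum.inl i)) ↑(b' (Sum.inr j)) = if i = j then 1 else 0 := by
        intro i j; simpa using hb3 i j
      have hPW : ∀ p ∈ P, ∀ (x : ↥W), ω p ↑x = 0 := fun p hp x => x.2 p hp
      have hWP : ∀ p ∈ P, ∀ (x : ↥W), ω ↑x p = 0 := fun p hp x => hrefl _ _ (hPW p hp x)
      set g : (Fin (m+1) ⊕ Fin (m+1)) → V :=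
        Sum.elim (Fin.cons v fun i => ((b' (Sum.inl i) : V)))
          (Fin.cons u fun i => (b' (Sum.inr i) : V)) with hg
      have hspan : ⊤ ≤ span ℝ (Set.range g) := by
        rw [← hcompl.sup_eq_top]
        apply sup_le
        · rw [hP, span_le]
          intro x hx
          simp only [Set.mem_insert_iff, Set.mem_singleton_iff] at hx
          rcases hx with rfl | rfl
          · exact subset_span ⟨Sum.inl 0, by simp [hg]⟩
          · exact subset_span ⟨Sum.inr 0, by simp [hg]⟩
        · have hWeq : W = span ℝ (Set.range (W.subtype ∘ b')) := by
            rw [Set.range_comp, Submodule.span_image, b'.span_eq, Submodule.map_subtype_top]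
          rw [hWeq]
          apply span_mono
          rintro _ ⟨x, rfl⟩
          rcases x with i | i
          · exact ⟨Sum.inl i.succ, by simp [hg]⟩
          · exact ⟨Sum.inr i.succ, by simp [hg]⟩
      have hcard : Fintype.card (Fin (m+1) ⊕ Fin (m+1)) = finrank ℝ V := by
        have hfrW := finrank_eq_card_basis b'
        have hsum := Submodule.finrank_add_eq_of_isCompl hcompl
        simp only [Fintype.card_sum, Fintype.card_fin] at hfrW ⊢
        omega
      have hzs : ∀ j : Fin m, (0 : Fin (m+1)) ≠ j.succ := fun j => (Fin.succ_ne_zero j).symm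
      refine ⟨m + 1, basisOfTopLeSpanOfCardEqFinrank g hspan hcard, ?_, ?_, ?_⟩ <;>
        intro i j <;>
        simp only [coe_basisOfTopLeSpanOfCardEqFinrank] <;>
        induction i using Fin.cases <;> induction j using Fin.cases <;>
        simp [hg, halt v, halt u, hωvu, hωuv, hPW v hvP, hPW u huP, hWP v hvP, hWP u huP,
          hb1', hb2', hb3', Fin.succ_inj, Fin.succ_ne_zero, hzs]

/-- Given subspaces `E, F` of equal finite rank with a (right-)separating pairing `ω`,
there are bases of `E` and `F` dual to each other under `ω`. -/
lemma exists_dual_pair_basis {V : Type u} [AddCommGroup V] [Module ℝ V] [FiniteDimensional ℝ V]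
    (ω : LinearMap.BilinForm ℝ V) (E F : Submodule ℝ V) (k : ℕ)
    (hkE : Module.finrank ℝ E = k) (hkF : Module.finrank ℝ F = k)
    (hsep : ∀ f : F, (∀ x : E, ω ↑x ↑f = 0) → f = 0) :
    ∃ (e : Basis (Fin k) ℝ E) (f : Basis (Fin k) ℝ F),
      ∀ i j, ω ↑(e i) ↑(f j) = if i = j then 1 else 0 := by
  classical
  let e : Basis (Fin k) ℝ E := Module.finBasisOfFinrankEq ℝ E hkE
  let Φ : F →ₗ[ℝ] (Fin k → ℝ) :=
    { toFun := fun f => fun i => ω ↑(e i) ↑f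
      map_add' := by intro f g; ext i; simp
      map_smul' := by intro c f; ext i; simp }
  have hker : ∀ f : F, Φ f = 0 → f = 0 := by
    intro f hf
    apply hsep
    intro x
    have hL : ((ω.flip (↑f : V)).comp E.subtype) = 0 :=
      e.ext fun i => by simpa [Φ, LinearMap.flip_apply] using congrFun hf i
    have := congrArg (fun (L : ↥E →ₗ[ℝ] ℝ) => L x) hL
    simpa [LinearMap.flip_apply] using this
  have hΦinj : Function.Injective Φ := by
    intro f g hfg
    have h0 : f - g = 0 := hker _ (by rw [map_sub, hfg, sub_self])
    rw [sub_eq_zero] at h0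
    exact h0
  have hdim : Module.finrank ℝ F = Module.finrank ℝ (Fin k → ℝ) := by
    simp [hkF]
  let Φeq := LinearMap.linearEquivOfInjective Φ hΦinj hdim
  refine ⟨e, (Pi.basisFun ℝ (Fin k)).map Φeq.symm, ?_⟩
  intro i j
  have h1 : Φ ((Pi.basisFun ℝ (Fin k)).map Φeq.symm j) = Pi.basisFun ℝ (Fin k) j := by
    rw [Basis.map_apply]
    have h3 : ∀ y : F, Φ y = Φeq y := fun y =>
      (LinearMap.linearEquivOfInjective_apply hΦinj hdim y).symm
    rw [h3, Φeq.apply_symm_apply]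
  have := congrFun h1 i
  simpa [Φ, Pi.basisFun_apply, Pi.single_apply, eq_comm] using this



/-- If `C, C'` are coisotropic subspaces of a finite-dimensional
symplectic vector space `(V,ω)` whose intersection is symplectic and whose dimensions
satisfy `dim C + dim C' = dim V + dim (C ∩ C')`, then there is a symplectic basis
`(e_1,…,e_n,f_1,…,f_n)` and a subset `A ⊆ {1,…,n}` such that `C` is spanned by all
basis vectors except the `f_α (α ∈ A)` and `C'` by all except the `e_α (α ∈ A)`;
equivalently, `C` and `C'` are cut out by the canonically conjugate coordinate
constraints `q_α = 0` resp. `p^α = 0` (α ∈ A). -/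
theorem stmt_3 {V : Type*} [AddCommGroup V] [Module ℝ V] [FiniteDimensional ℝ V]
    (ω : LinearMap.BilinForm ℝ V)
    (halt : ∀ v : V, ω v v = 0)
    (hnondeg : ∀ v : V, (∀ w : V, ω v w = 0) → v = 0)
    (C C' : Submodule ℝ V)
    (hC : ∀ v : V, (∀ w ∈ C, ω v w = 0) → v ∈ C)
    (hC' : ∀ v : V, (∀ w ∈ C', ω v w = 0) → v ∈ C')
    (hsymp : ∀ v ∈ C ⊓ C', (∀ w ∈ C ⊓ C', ω v w = 0) → v = 0)
    (hdim : Module.finrank ℝ C + Module.finrank ℝ C'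
              = Module.finrank ℝ V + Module.finrank ℝ (C ⊓ C' : Submodule ℝ V)) :
    ∃ (n : ℕ) (b : Basis (Fin n ⊕ Fin n) ℝ V) (A : Finset (Fin n)),
      (∀ i j, ω (b (Sum.inl i)) (b (Sum.inl j)) = 0) ∧
      (∀ i j, ω (b (Sum.inr i)) (b (Sum.inr j)) = 0) ∧
      (∀ i j, ω (b (Sum.inl i)) (b (Sum.inr j)) = if i = j then 1 else 0) ∧
      C = Submodule.span ℝ (⇑b '' {x : Fin n ⊕ Fin n | ∀ a ∈ A, x ≠ Sum.inr a}) ∧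
      C' = Submodule.span ℝ (⇑b '' {x : Fin n ⊕ Fin n | ∀ a ∈ A, x ≠ Sum.inl a}) ∧
      (∀ v : V, v ∈ C ↔ ∀ a ∈ A, b.coord (Sum.inr a) v = 0) ∧
      (∀ v : V, v ∈ C' ↔ ∀ a ∈ A, b.coord (Sum.inl a) v = 0) := by
  classical
  have hAlt : ω.IsAlt := halt
  have hrefl : ω.IsRefl := hAlt.isRefl
  have hnd : ω.Nondegenerate := nondeg_of_sepLeft_of_isAlt ω hAlt hnondeg
  set D : Submodule ℝ V := C ⊓ C' with hDdef
  have hDnd : (ω.restrict D).Nondegenerate := by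
    refine nondeg_of_sepLeft_of_isAlt _ (fun x => halt x) ?_
    rintro ⟨x, hx⟩ hxall
    apply Subtype.ext
    exact hsymp x hx fun w hw => by simpa using hxall ⟨w, hw⟩
  have hcompl : IsCompl D (ω.orthogonal D) :=
    ω.isCompl_orthogonal_of_restrict_nondegenerate hrefl hDnd
  set W : Submodule ℝ V := ω.orthogonal D with hWdef
  set E : Submodule ℝ V := ω.orthogonal C with hEdef
  set F : Submodule ℝ V := ω.orthogonal C' with hFdef
  have hEC : E ≤ C := fun v hv => hC v fun w hw => hrefl w v (hv w hw)
  have hFC' : F ≤ C' := fun v hv => hC' v fun w hw => hrefl w v (hv w hw)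
  have hEW : E ≤ W := ω.orthogonal_le inf_le_left
  have hFW : F ≤ W := ω.orthogonal_le inf_le_right
  have htop : C ⊔ C' = ⊤ := by
    apply Submodule.eq_top_of_finrank_eq
    have h0 := Submodule.finrank_sup_add_finrank_inf_eq C C'
    rw [← hDdef] at h0
    have h1 := Submodule.finrank_le (C ⊔ C')
    omega
  have hEFdisj : E ⊓ F = ⊥ := by
    rw [Submodule.eq_bot_iff]
    rintro x ⟨hxE, hxF⟩
    apply hnd.1
    intro y
    have hy : y ∈ C ⊔ C' := htop ▸ Submodule.mem_top
    obtain ⟨c, hc, c', hc', rfl⟩ := Submodule.mem_sup.mp hy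
    have h1 : ω x c = 0 := hrefl c x (hxE c hc)
    have h2 : ω x c' = 0 := hrefl c' x (hxF c' hc')
    simp [h1, h2]
  have hfrE : Module.finrank ℝ E = Module.finrank ℝ V - Module.finrank ℝ C :=
    ω.finrank_orthogonal hnd C
  have hfrF : Module.finrank ℝ F = Module.finrank ℝ V - Module.finrank ℝ C' :=
    ω.finrank_orthogonal hnd C'
  have hfrW : Module.finrank ℝ W = Module.finrank ℝ V - Module.finrank ℝ D :=
    ω.finrank_orthogonal hnd D
  have hleC : Module.finrank ℝ C ≤ Module.finrank ℝ V := Submodule.finrank_le C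
  have hleC' : Module.finrank ℝ C' ≤ Module.finrank ℝ V := Submodule.finrank_le C'
  have hleD : Module.finrank ℝ D ≤ Module.finrank ℝ C :=
    Submodule.finrank_mono inf_le_left
  have hEFsup : E ⊔ F = W := by
    apply Submodule.eq_of_le_of_finrank_le (sup_le hEW hFW)
    have h0 := Submodule.finrank_sup_add_finrank_inf_eq E F
    rw [hEFdisj] at h0
    simp only [finrank_bot, add_zero] at h0
    omega
  have hWdisj : (C ⊓ W) ⊓ (C' ⊓ W) = ⊥ := by
    rw [Submodule.eq_bot_iff]
    rintro x ⟨⟨hxC, hxW⟩, ⟨hxC', _⟩⟩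
    have : x ∈ D ⊓ W := ⟨⟨hxC, hxC'⟩, hxW⟩
    rwa [hcompl.inf_eq_bot] at this
  have hsum2 : Module.finrank ℝ (C ⊓ W : Submodule ℝ V) + Module.finrank ℝ (C' ⊓ W : Submodule ℝ V)
      ≤ Module.finrank ℝ W := by
    have h0 := Submodule.finrank_sup_add_finrank_inf_eq (C ⊓ W) (C' ⊓ W)
    rw [hWdisj] at h0
    simp only [finrank_bot, add_zero] at h0
    have h1 : Module.finrank ℝ ((C ⊓ W) ⊔ (C' ⊓ W) : Submodule ℝ V) ≤ Module.finrank ℝ W :=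
      Submodule.finrank_mono (sup_le (inf_le_right) (inf_le_right))
    omega
  have hfrEF : Module.finrank ℝ E + Module.finrank ℝ F = Module.finrank ℝ W := by
    have h0 := Submodule.finrank_sup_add_finrank_inf_eq E F
    rw [hEFdisj, hEFsup] at h0
    simp only [finrank_bot, add_zero] at h0
    omega
  have hECW : E = C ⊓ W := by
    apply Submodule.eq_of_le_of_finrank_le (le_inf hEC hEW)
    have h1 : Module.finrank ℝ F ≤ Module.finrank ℝ (C' ⊓ W : Submodule ℝ V) :=
      Submodule.finrank_mono (le_inf hFC' hFW)
    omega
  have hFC'W : F = C' ⊓ W := by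
    apply Submodule.eq_of_le_of_finrank_le (le_inf hFC' hFW)
    have h1 : Module.finrank ℝ E ≤ Module.finrank ℝ (C ⊓ W : Submodule ℝ V) :=
      Submodule.finrank_mono (le_inf hEC hEW)
    omega
  have hCDE : C = D ⊔ E := by
    have h1 : D ⊔ (W ⊓ C) = (D ⊔ W) ⊓ C := (sup_inf_assoc_of_le W inf_le_left).symm
    rw [hcompl.sup_eq_top, top_inf_eq] at h1
    rw [← h1, inf_comm W C, ← hECW]
  have hC'DF : C' = D ⊔ F := by
    have h1 : D ⊔ (W ⊓ C') = (D ⊔ W) ⊓ C' := (sup_inf_assoc_of_le W inf_le_right).symm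
    rw [hcompl.sup_eq_top, top_inf_eq] at h1
    rw [← h1, inf_comm W C', ← hFC'W]
  -- equal ranks of E and F
  have hDEdisj : D ⊓ E = ⊥ := by
    rw [Submodule.eq_bot_iff]
    rintro x ⟨hxD, hxE⟩
    have : x ∈ D ⊓ W := ⟨hxD, hEW hxE⟩
    rwa [hcompl.inf_eq_bot] at this
  have hDFdisj : D ⊓ F = ⊥ := by
    rw [Submodule.eq_bot_iff]
    rintro x ⟨hxD, hxF⟩
    have : x ∈ D ⊓ W := ⟨hxD, hFW hxF⟩
    rwa [hcompl.inf_eq_bot] at this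
  have hfrC : Module.finrank ℝ C = Module.finrank ℝ D + Module.finrank ℝ E := by
    have h0 := Submodule.finrank_sup_add_finrank_inf_eq D E
    rw [hDEdisj, ← hCDE] at h0
    simp only [finrank_bot, add_zero] at h0
    omega
  have hfrC' : Module.finrank ℝ C' = Module.finrank ℝ D + Module.finrank ℝ F := by
    have h0 := Submodule.finrank_sup_add_finrank_inf_eq D F
    rw [hDFdisj, ← hC'DF] at h0
    simp only [finrank_bot, add_zero] at h0
    omega
  set k : ℕ := Module.finrank ℝ E with hkdef
  have hkF : Module.finrank ℝ F = k := by omega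
  -- isotropy
  have hEiso : ∀ x ∈ E, ∀ y ∈ E, ω x y = 0 := fun x hx y hy => hy x (hEC hx)
  have hFiso : ∀ x ∈ F, ∀ y ∈ F, ω x y = 0 := fun x hx y hy => hy x (hFC' hx)
  have hDW : ∀ x ∈ D, ∀ y ∈ W, ω x y = 0 := fun x hx y hy => hy x hx
  -- separation of the pairing E × F
  have hsepF : ∀ f : F, (∀ x : E, ω ↑x ↑f = 0) → f = 0 := by
    rintro ⟨f0, hf0⟩ hf
    apply Subtype.ext
    show f0 = 0
    apply hnd.1
    intro y
    have hy : y ∈ D ⊔ W := by rw [hcompl.sup_eq_top]; trivial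
    obtain ⟨d, hd, w, hw, rfl⟩ := Submodule.mem_sup.mp hy
    have hwEF : w ∈ E ⊔ F := by rw [hEFsup]; exact hw
    obtain ⟨e0, he0, f1, hf1, rfl⟩ := Submodule.mem_sup.mp hwEF
    have h1 : ω f0 d = 0 := hrefl d f0 (hDW d hd f0 (hFW hf0))
    have h2 : ω f0 e0 = 0 := hrefl e0 f0 (hf ⟨e0, he0⟩)
    have h3 : ω f0 f1 = 0 := hFiso f0 hf0 f1 hf1
    simp [h1, h2, h3]
  obtain ⟨e, f, hef⟩ := exists_dual_pair_basis ω E F k rfl hkF hsepF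
  -- symplectic basis of D
  have hDalt : (ω.restrict D).IsAlt := fun x => halt x
  obtain ⟨m, bD, hD1, hD2, hD3⟩ :=
    exists_symplectic_basis (Module.finrank ℝ D) D (ω.restrict D) rfl hDalt hDnd
  have hD1' : ∀ i j, ω ↑(bD (Sum.inl i)) ↑(bD (Sum.inl j)) = 0 := by
    intro i j; simpa using hD1 i j
  have hD2' : ∀ i j, ω ↑(bD (Sum.inr i)) ↑(bD (Sum.inr j)) = 0 := by
    intro i j; simpa using hD2 i j
  have hD3' : ∀ i j, ω ↑(bD (Sum.inl i)) ↑(bD (Sum.inr j)) = if i = j then 1 else 0 := by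
    intro i j; simpa using hD3 i j
  -- the glued family
  set n : ℕ := m + k with hndef
  set g : Fin n ⊕ Fin n → V :=
    Sum.elim
      (fun i => Sum.elim (fun i' => (↑(bD (Sum.inl i')) : V)) (fun α => (↑(e α) : V))
        (finSumFinEquiv.symm i))
      (fun i => Sum.elim (fun i' => (↑(bD (Sum.inr i')) : V)) (fun α => (↑(f α) : V))
        (finSumFinEquiv.symm i)) with hgdef
  have hginlD : ∀ i', g (Sum.inl (finSumFinEquiv (Sum.inl i'))) = ↑(bD (Sum.inl i')) := by
    intro i'; simp [hgdef]
  have hginlE : ∀ α, g (Sum.inl (finSumFinEquiv (Sum.inr α))) = ↑(e α) := by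
    intro α; simp [hgdef]
  have hginrD : ∀ i', g (Sum.inr (finSumFinEquiv (Sum.inl i'))) = ↑(bD (Sum.inr i')) := by
    intro i'; simp [hgdef]
  have hginrF : ∀ α, g (Sum.inr (finSumFinEquiv (Sum.inr α))) = ↑(f α) := by
    intro α; simp [hgdef]
  have hsub : ∀ (U : Submodule ℝ V) (c : Basis (Fin k) ℝ U),
      (∀ α : Fin k, (↑(c α) : V) ∈ Set.range g) → U ≤ Submodule.span ℝ (Set.range g) := by
    intro U c hc
    have hUeq : U = Submodule.span ℝ (Set.range (U.subtype ∘ c)) := by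
      rw [Set.range_comp, Submodule.span_image, c.span_eq, Submodule.map_subtype_top]
    rw [hUeq]
    apply Submodule.span_le.mpr
    rintro _ ⟨α, rfl⟩
    exact Submodule.subset_span (hc α)
  have hspan : ⊤ ≤ Submodule.span ℝ (Set.range g) := by
    rw [← hcompl.sup_eq_top]
    apply sup_le
    · have hDeq : D = Submodule.span ℝ (Set.range (D.subtype ∘ bD)) := by
        rw [Set.range_comp, Submodule.span_image, bD.span_eq, Submodule.map_subtype_top]
      rw [hDeq]
      apply Submodule.span_le.mpr
      rintro _ ⟨x, rfl⟩
      rcases x with i' | i'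
      · exact Submodule.subset_span ⟨Sum.inl (finSumFinEquiv (Sum.inl i')), hginlD i'⟩
      · exact Submodule.subset_span ⟨Sum.inr (finSumFinEquiv (Sum.inl i')), hginrD i'⟩
    · rw [← hEFsup]
      apply sup_le
      · exact hsub E e fun α => ⟨Sum.inl (finSumFinEquiv (Sum.inr α)), hginlE α⟩
      · exact hsub F f fun α => ⟨Sum.inr (finSumFinEquiv (Sum.inr α)), hginrF α⟩
  have hcard : Fintype.card (Fin n ⊕ Fin n) = Module.finrank ℝ V := by
    have h1 := Module.finrank_eq_card_basis bD
    have h2 := Submodule.finrank_add_eq_of_isCompl hcompl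
    simp only [Fintype.card_sum, Fintype.card_fin] at h1 ⊢
    omega
  set b : Basis (Fin n ⊕ Fin n) ℝ V := basisOfTopLeSpanOfCardEqFinrank g hspan hcard with hbdef
  have hbg : ⇑b = g := coe_basisOfTopLeSpanOfCardEqFinrank g hspan hcard
  -- auxiliary orthogonality facts
  have hDWr : ∀ x ∈ W, ∀ y ∈ D, ω x y = 0 := fun x hx y hy => hrefl y x (hDW y hy x hx)
  have hval1 : ∀ i j, ω (b (Sum.inl i)) (b (Sum.inl j)) = 0 := by
    intro i j
    rw [hbg]
    rcases hsi : finSumFinEquiv.symm i with i' | α <;>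
      obtain rfl := (Equiv.symm_apply_eq _).mp hsi <;>
      rcases hsj : finSumFinEquiv.symm j with j' | β <;>
      obtain rfl := (Equiv.symm_apply_eq _).mp hsj
    · rw [hginlD, hginlD]; exact hD1' i' j'
    · rw [hginlD, hginlE]
      exact hDW _ (bD (Sum.inl i')).2 _ (hEW (e β).2)
    · rw [hginlE, hginlD]
      exact hDWr _ (hEW (e α).2) _ (bD (Sum.inl j')).2
    · rw [hginlE, hginlE]; exact hEiso _ (e α).2 _ (e β).2
  have hval2 : ∀ i j, ω (b (Sum.inr i)) (b (Sum.inr j)) = 0 := by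
    intro i j
    rw [hbg]
    rcases hsi : finSumFinEquiv.symm i with i' | α <;>
      obtain rfl := (Equiv.symm_apply_eq _).mp hsi <;>
      rcases hsj : finSumFinEquiv.symm j with j' | β <;>
      obtain rfl := (Equiv.symm_apply_eq _).mp hsj
    · rw [hginrD, hginrD]; exact hD2' i' j'
    · rw [hginrD, hginrF]
      exact hDW _ (bD (Sum.inr i')).2 _ (hFW (f β).2)
    · rw [hginrF, hginrD]
      exact hDWr _ (hFW (f α).2) _ (bD (Sum.inr j')).2
    · rw [hginrF, hginrF]; exact hFiso _ (f α).2 _ (f β).2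
  have hval3 : ∀ i j, ω (b (Sum.inl i)) (b (Sum.inr j)) = if i = j then 1 else 0 := by
    intro i j
    rw [hbg]
    rcases hsi : finSumFinEquiv.symm i with i' | α <;>
      obtain rfl := (Equiv.symm_apply_eq _).mp hsi <;>
      rcases hsj : finSumFinEquiv.symm j with j' | β <;>
      obtain rfl := (Equiv.symm_apply_eq _).mp hsj
    · rw [hginlD, hginrD, hD3' i' j']
      by_cases h : i' = j'
      · subst h; simp
      · rw [if_neg h, if_neg fun hc => h (Sum.inl.inj (finSumFinEquiv.injective hc))]
    · rw [hginlD, hginrF, if_neg fun hc => Sum.inl_ne_inr (finSumFinEquiv.injective hc)]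
      exact hDW _ (bD (Sum.inl i')).2 _ (hFW (f β).2)
    · rw [hginlE, hginrD, if_neg fun hc => Sum.inr_ne_inl (finSumFinEquiv.injective hc)]
      exact hDWr _ (hEW (e α).2) _ (bD (Sum.inr j')).2
    · rw [hginlE, hginrF, hef α β]
      by_cases h : α = β
      · subst h; simp
      · rw [if_neg h, if_neg fun hc => h (Sum.inr.inj (finSumFinEquiv.injective hc))]
  -- coordinates via the symplectic pairing
  have hcoordR : ∀ (j : Fin n) (v : V), b.coord (Sum.inr j) v = ω (b (Sum.inl j)) v := by
    intro j v
    have hmap : (b.coord (Sum.inr j)) = ω (b (Sum.inl j)) := by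
      apply b.ext
      intro x
      rw [Basis.coord_apply, Basis.repr_self_apply]
      rcases x with i | i
      · rw [hval1, if_neg (by simp)]
      · rw [hval3]
        by_cases h : j = i
        · subst h; simp
        · rw [if_neg h, if_neg (by simp [Ne.symm h])]
    exact DFunLike.congr_fun hmap v
  have hcoordL : ∀ (j : Fin n) (v : V), b.coord (Sum.inl j) v = ω v (b (Sum.inr j)) := by
    intro j v
    have hmap : (b.coord (Sum.inl j)) = ω.flip (b (Sum.inr j)) := by
      apply b.ext
      intro x
      rw [Basis.coord_apply, Basis.repr_self_apply]
      simp only [LinearMap.BilinForm.flip_apply]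
      rcases x with i | i
      · rw [hval3]
        by_cases h : i = j
        · subst h; simp
        · rw [if_neg h, if_neg (by simp [h])]
      · rw [hval2, if_neg (by simp)]
    rw [DFunLike.congr_fun hmap v]
    simp only [LinearMap.BilinForm.flip_apply]
  -- membership characterizations
  have hCorth : C = ω.orthogonal E :=
    (ω.orthogonal_orthogonal hnd hrefl C).symm
  have hC'orth : C' = ω.orthogonal F :=
    (ω.orthogonal_orthogonal hnd hrefl C').symm
  have hmemC : ∀ v : V, v ∈ C ↔ ∀ α : Fin k, ω ↑(e α) v = 0 := by
    intro v
    rw [hCorth]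
    constructor
    · intro hv α
      exact hv ↑(e α) (e α).2
    · intro h x hx
      show ω x v = 0
      have hL : ((ω.flip v).comp E.subtype) = 0 :=
        e.ext fun α => by simpa using h α
      have := DFunLike.congr_fun hL ⟨x, hx⟩
      simpa using this
  have hmemC' : ∀ v : V, v ∈ C' ↔ ∀ α : Fin k, ω ↑(f α) v = 0 := by
    intro v
    rw [hC'orth]
    constructor
    · intro hv α
      exact hv ↑(f α) (f α).2
    · intro h x hx
      show ω x v = 0
      have hL : ((ω.flip v).comp F.subtype) = 0 :=
        f.ext fun α => by simpa using h α
      have := DFunLike.congr_fun hL ⟨x, hx⟩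
      simpa using this
  set A : Finset (Fin n) := Finset.univ.filter (fun i => (finSumFinEquiv.symm i).isRight)
    with hAdef
  have hmemA : ∀ a, a ∈ A ↔ ∃ α, finSumFinEquiv.symm a = Sum.inr α := by
    intro a
    simp [hAdef, Sum.isRight_iff]
  have hresC : ∀ v : V, v ∈ C ↔ ∀ a ∈ A, b.coord (Sum.inr a) v = 0 := by
    intro v
    rw [hmemC v]
    constructor
    · intro h a ha
      obtain ⟨α, hα⟩ := (hmemA a).mp ha
      obtain rfl := (Equiv.symm_apply_eq _).mp hα
      rw [hcoordR, hbg, hginlE]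
      exact h α
    · intro h α
      have := h (finSumFinEquiv (Sum.inr α)) ((hmemA _).mpr ⟨α, by simp⟩)
      rwa [hcoordR, hbg, hginlE] at this
  have hresC' : ∀ v : V, v ∈ C' ↔ ∀ a ∈ A, b.coord (Sum.inl a) v = 0 := by
    intro v
    rw [hmemC' v]
    have hswap : ∀ x y : V, ω x y = 0 ↔ ω y x = 0 := fun x y => ⟨hrefl x y, hrefl y x⟩
    constructor
    · intro h a ha
      obtain ⟨α, hα⟩ := (hmemA a).mp ha
      obtain rfl := (Equiv.symm_apply_eq _).mp hα
      rw [hcoordL, hbg, hginrF]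
      exact (hswap _ _).mp (h α)
    · intro h α
      have := h (finSumFinEquiv (Sum.inr α)) ((hmemA _).mpr ⟨α, by simp⟩)
      rw [hcoordL, hbg, hginrF] at this
      exact (hswap _ _).mpr this
  have hspanC : C = Submodule.span ℝ (⇑b '' {x : Fin n ⊕ Fin n | ∀ a ∈ A, x ≠ Sum.inr a}) := by
    ext v
    rw [Basis.mem_span_image, hresC v]
    constructor
    · intro h x hx a ha hxa
      subst hxa
      have h0 := h a ha
      rw [Basis.coord_apply] at h0
      exact Finsupp.mem_support_iff.mp hx h0
    · intro h a ha
      rw [Basis.coord_apply]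
      by_contra hne
      exact (h (Finsupp.mem_support_iff.mpr hne)) a ha rfl
  have hspanC' : C' = Submodule.span ℝ (⇑b '' {x : Fin n ⊕ Fin n | ∀ a ∈ A, x ≠ Sum.inl a}) := by
    ext v
    rw [Basis.mem_span_image, hresC' v]
    constructor
    · intro h x hx a ha hxa
      subst hxa
      have h0 := h a ha
      rw [Basis.coord_apply] at h0
      exact Finsupp.mem_support_iff.mp hx h0
    · intro h a ha
      rw [Basis.coord_apply]
      by_contra hne
      exact (h (Finsupp.mem_support_iff.mpr hne)) a ha rfl
  exact ⟨n, b, A, hval1, hval2, hval3, hspanC, hspanC', hresC, hresC'⟩
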